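/- Let A be a Banach algebra, B a closed subalgebra of A and I a closed two-sided ideal of A such that A = B ⊕ I (B and I are closed complementary subspaces of A). If A is approximately cyclic amenable, then B is approximately cyclic amenable. -/

import Mathlib

open Filter Topology

noncomputable section

universe u v

variable {A : Type u} [NonUnitalNormedRing A] [NormedSpace ℂ A]
  [IsScalarTower ℂ A A] [SMulCommClass ℂ A A]

/-- The left module action of `A` on its dual `A*`: `(a · f) b = f (b * a)`. -/
def lAct (a : A) (f : A →L[ℂ] ℂ) : A →L[ℂ] ℂ :=
  f.comp ((ContinuousLinearMap.mul ℂ A).flip a)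

/-- The right module action of `A` on its dual `A*`: `(f · a) b = f (a * b)`. -/
def rAct (f : A →L[ℂ] ℂ) (a : A) : A →L[ℂ] ℂ :=
  f.comp (ContinuousLinearMap.mul ℂ A a)

/-- A bounded linear `D : A → A*` is a derivation if `D (a * b) = D a · b + a · D b`. -/
def IsDerivation (D : A →L[ℂ] (A →L[ℂ] ℂ)) : Prop :=
  ∀ a b : A, D (a * b) = rAct (D a) b + lAct a (D b)

/-- A derivation `D : A → A*` is cyclic if `⟨D a, b⟩ + ⟨D b, a⟩ = 0` for all `a, b`. -/
def IsCyclicDeriv (D : A →L[ℂ] (A →L[ℂ] ℂ)) : Prop :=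
  ∀ a b : A, D a b + D b a = 0

/-- `D : A → A*` is approximately inner if there is a net `(f i)` in `A*` with
`D a = lim_i (a · f i - f i · a)` in norm, for every `a ∈ A`. -/
def IsApproxInner {A : Type u} [NonUnitalNormedRing A] [NormedSpace ℂ A]
    [IsScalarTower ℂ A A] [SMulCommClass ℂ A A] (D : A →L[ℂ] (A →L[ℂ] ℂ)) : Prop :=
  ∃ (ι : Type u) (l : Filter ι) (f : ι → (A →L[ℂ] ℂ)), l.NeBot ∧
    ∀ a : A, Tendsto (fun i => lAct a (f i) - rAct (f i) a) l (𝓝 (D a))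

/-- `D : A → A*` is inner if `D a = a · f - f · a` for some fixed `f ∈ A*`. -/
def IsInner (D : A →L[ℂ] (A →L[ℂ] ℂ)) : Prop :=
  ∃ f : A →L[ℂ] ℂ, ∀ a : A, D a = lAct a f - rAct f a

/-- A Banach algebra is approximately cyclic amenable if every cyclic bounded
derivation `D : A → A*` is approximately inner. -/
def ApproxCyclicAmenable (A : Type u) [NonUnitalNormedRing A] [NormedSpace ℂ A]
    [IsScalarTower ℂ A A] [SMulCommClass ℂ A A] : Prop :=
  ∀ D : A →L[ℂ] (A →L[ℂ] ℂ), IsDerivation D → IsCyclicDeriv D → IsApproxInner D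

/-- A Banach algebra is cyclic amenable if every cyclic bounded derivation
`D : A → A*` is inner. -/
def CyclicAmenable (A : Type u) [NonUnitalNormedRing A] [NormedSpace ℂ A]
    [IsScalarTower ℂ A A] [SMulCommClass ℂ A A] : Prop :=
  ∀ D : A →L[ℂ] (A →L[ℂ] ℂ), IsDerivation D → IsCyclicDeriv D → IsInner D

/-- The normed-space structure on a non-unital subalgebra, restricted from `A`. -/
instance nonUnitalSubalgebraNormedSpaceComplex (B : NonUnitalSubalgebra ℂ A) :
    NormedSpace ℂ B :=
  SubmoduleClass.toNormedSpace (R := ℂ) B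

set_option maxHeartbeats 1000000 in
/-- Let `B` be a closed subalgebra and `I` a closed two-sided ideal of a
Banach algebra `A` such that `A = B ⊕ I`.  If `A` is approximately cyclic amenable, then so
is `B`. -/
theorem subalgebra_approxCyclicAmenable_of_directSum
    {A : Type u} [NonUnitalNormedRing A] [NormedSpace ℂ A]
    [IsScalarTower ℂ A A] [SMulCommClass ℂ A A] [CompleteSpace A]
    (B : NonUnitalSubalgebra ℂ A) (hBclosed : IsClosed (B : Set A))
    (I : Submodule ℂ A) (hIclosed : IsClosed (I : Set A))
    (hr : ∀ (a : A), ∀ x ∈ I, x * a ∈ I) (hl : ∀ (a : A), ∀ x ∈ I, a * x ∈ I)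
    (hdisj : ∀ x : A, x ∈ B → x ∈ I → x = 0)
    (hsum : ∀ a : A, ∃ b ∈ B, ∃ x ∈ I, a = b + x)
    (hA : ApproxCyclicAmenable A) :
    ApproxCyclicAmenable ↥B := by
  intro D hD hDc
  -- the projection P : A → B along I
  set Bs : Submodule ℂ A := B.toSubmodule with hBs
  have hcompl : IsCompl Bs I := by
    constructor
    · rw [disjoint_iff_inf_le]
      intro x hx
      exact hdisj x hx.1 hx.2
    · rw [codisjoint_iff_le_sup]
      intro a _
      obtain ⟨b, hb, x, hx, rfl⟩ := hsum a
      exact Submodule.add_mem_sup hb hx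
  let P : A →L[ℂ] ↥B := Bs.linearProjOfClosedCompl I hcompl hBclosed hIclosed
  have hPleft : ∀ x : ↥B, P (x : A) = x := fun x =>
    Submodule.linearProjOfIsCompl_apply_left hcompl x
  have hPright : ∀ x ∈ I, P x = 0 := fun x hx =>
    Submodule.linearProjOfIsCompl_apply_right hcompl ⟨x, hx⟩
  -- P is multiplicative
  have hPmul : ∀ a a' : A, (P (a * a') : A) = (P a : A) * (P a' : A) := by
    intro a a'
    obtain ⟨b, hb, x, hx, rfl⟩ := hsum a
    obtain ⟨b', hb', x', hx', rfl⟩ := hsum a'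
    have hb2 : ∀ c : A, ∀ hc : c ∈ B, (P c : A) = c := fun c hc =>
      congrArg Subtype.val (hPleft ⟨c, hc⟩)
    have e1 : P (b + x) = P b := by
      rw [map_add, hPright x hx, add_zero]
    have e2 : P (b' + x') = P b' := by
      rw [map_add, hPright x' hx', add_zero]
    have e3 : (b + x) * (b' + x') = b * b' + (b * x' + x * b' + x * x') := by
      simp only [add_mul, mul_add]; abel
    have hmem : b * x' + x * b' + x * x' ∈ I :=
      I.add_mem (I.add_mem (hl b x' hx') (hr b' x hx)) (hr x' x hx)
    rw [e1, e2, e3, map_add, hPright _ hmem, add_zero, hb2 b hb, hb2 b' hb',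
      hb2 _ (B.mul_mem hb hb')]
  -- the inclusion
  let ιB : ↥B →L[ℂ] A := Bs.subtypeL
  -- extend D to A
  let R : (A →L[ℂ] ℂ) →L[ℂ] (↥B →L[ℂ] ℂ) :=
    (ContinuousLinearMap.compL ℂ ↥B A ℂ).flip ιB
  let R' : (↥B →L[ℂ] ℂ) →L[ℂ] (A →L[ℂ] ℂ) :=
    (ContinuousLinearMap.compL ℂ A ↥B ℂ).flip P
  let Dt : A →L[ℂ] (A →L[ℂ] ℂ) := R'.comp (D.comp P)
  have hDt : ∀ (a : A) (c : A), Dt a c = D (P a) (P c) := fun a c => rfl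
  have hDtder : IsDerivation Dt := by
    intro a a'
    ext c
    have : P (a * a') = P a * P a' := Subtype.ext (hPmul a a')
    simp only [hDt, this, hD (P a) (P a'), ContinuousLinearMap.add_apply,
      rAct, lAct, ContinuousLinearMap.coe_comp', Function.comp_apply,
      ContinuousLinearMap.mul_apply', ContinuousLinearMap.flip_apply]
    congr 2
    · exact (Subtype.ext (hPmul a' c)).symm
    · exact (Subtype.ext (hPmul c a)).symm
  have hDtcyc : IsCyclicDeriv Dt := by
    intro a a'
    simp only [hDt]
    exact hDc (P a) (P a')
  obtain ⟨ι, l, f, hne, hf⟩ := hA Dt hDtder hDtcyc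
  refine ⟨ι, l, fun i => R (f i), hne, fun b => ?_⟩
  have key : ∀ i, lAct b (R (f i)) - rAct (R (f i)) b
      = R (lAct (ιB b) (f i) - rAct (f i) (ιB b)) := by
    intro i
    ext c
    simp only [lAct, rAct, R, ContinuousLinearMap.sub_apply,
      ContinuousLinearMap.coe_comp', Function.comp_apply,
      ContinuousLinearMap.mul_apply', ContinuousLinearMap.flip_apply,
      ContinuousLinearMap.compL_apply]
    rfl
  have keyD : R (Dt (ιB b)) = D b := by
    ext c
    simp only [R, ContinuousLinearMap.flip_apply, ContinuousLinearMap.compL_apply,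
      ContinuousLinearMap.coe_comp', Function.comp_apply]
    rw [hDt, show (ιB b : A) = (b : A) from rfl, show (ιB c : A) = (c : A) from rfl,
      hPleft b, hPleft c]
  have := (R.continuous.tendsto _).comp (hf (ιB b))
  rw [keyD] at this
  simpa only [Function.comp_def, map_sub, ← key] using this
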